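/- arXiv:1904.08070 — 3 statements merged into one kernel-verified Lean document; each statement's English description precedes it below -/
import Mathlib

section
/- Let G be a finite group and Θ a generalized character of G taking exactly N distinct values a₀ = Θ(1), a₁, …, a_{N−1} on G, and suppose Θ(g) ≠ Θ(1) for all g ≠ 1 in G. Then every irreducible complex character χ of G occurs as an irreducible constituent of Θ^k for some 0 ≤ k ≤ N−1. -/
open scoped BigOperators

/-- Inner product of class functions on a finite group `G`. -/
noncomputable def innerChar (G : Type) [Group G] (f h : G → ℂ) : ℂ :=
  (Nat.card G : ℂ)⁻¹ * ∑ᶠ g : G, f g * (starRingEnd ℂ) (h g)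

/-- `f` is the character of some finite-dimensional complex representation of `G`. -/
def IsChar (G : Type) [Group G] (f : G → ℂ) : Prop :=
  ∃ V : FDRep ℂ G, f = V.character

/-- `f` is an irreducible complex character of `G`. -/
def IsIrrChar (G : Type) [Group G] (f : G → ℂ) : Prop :=
  ∃ V : FDRep ℂ G, CategoryTheory.Simple V ∧ f = V.character

/-- `f` is a generalized character (difference of two characters) of `G`. -/
def IsGenChar (G : Type) [Group G] (f : G → ℂ) : Prop :=
  ∃ V W : FDRep ℂ G, f = fun g => V.character g - W.character g

open scoped Classical in
noncomputable def indChar {G : Type} [Group G] (H : Subgroup G) (φ : H → ℂ) : G → ℂ :=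
  fun g => (Nat.card H : ℂ)⁻¹ *
    ∑ᶠ x : G, if h : x⁻¹ * g * x ∈ H then φ ⟨x⁻¹ * g * x, h⟩ else 0

open Polynomial CategoryTheory in
/-- Burnside-type lemma: if a generalized character Θ takes exactly N values and
Θ(g) ≠ Θ(1) for g ≠ 1, then every irreducible character is a constituent of some Θ^k,
0 ≤ k ≤ N-1. -/
theorem stmt_0 (G : Type) [Group G] [Fintype G]
    (Θ : G → ℂ) (hΘ : IsGenChar G Θ) (N : ℕ)
    (hvals : (Set.range Θ).ncard = N)
    (hne : ∀ g : G, g ≠ 1 → Θ g ≠ Θ 1) :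
    ∀ χ : G → ℂ, IsIrrChar G χ →
      ∃ k : ℕ, k ≤ N - 1 ∧ innerChar G (fun g => (Θ g) ^ k) χ ≠ 0 := by
  classical
  rintro χ ⟨V, hV, rfl⟩
  by_contra hcon
  push_neg at hcon
  have hGard : ((Nat.card G : ℂ))⁻¹ ≠ 0 := by
    simp [Nat.card_eq_fintype_card, Fintype.card_ne_zero]
  have hsum : ∀ k ≤ N - 1,
      ∑ g : G, Θ g ^ k * (starRingEnd ℂ) (V.character g) = 0 := by
    intro k hk
    have h := hcon k hk
    rw [innerChar, finsum_eq_sum_of_fintype] at h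
    exact (mul_eq_zero.mp h).resolve_left hGard
  set S : Finset ℂ := (Set.finite_range Θ).toFinset with hS
  have hScard : S.card = N := by
    rw [← hvals, Set.ncard_eq_toFinset_card']
    simp [hS]
  have h1S : Θ 1 ∈ S := by simp [hS]
  set T : Finset ℂ := S.erase (Θ 1) with hT
  have hTcard : T.card = N - 1 := by
    rw [hT, Finset.card_erase_of_mem h1S, hScard]
  set p : ℂ[X] := ∏ a ∈ T, (X - C a) with hp
  have hdeg : p.natDegree = N - 1 := by
    rw [hp, Polynomial.natDegree_prod _ _ (fun a _ => X_sub_C_ne_zero a)]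
    simp [hTcard]
  have key : ∑ g : G, p.eval (Θ g) * (starRingEnd ℂ) (V.character g) = 0 := by
    have h1 : ∀ g : G, p.eval (Θ g) * (starRingEnd ℂ) (V.character g)
        = ∑ k ∈ Finset.range (N - 1 + 1),
            p.coeff k * (Θ g ^ k * (starRingEnd ℂ) (V.character g)) := by
      intro g
      rw [Polynomial.eval_eq_sum_range, hdeg, Finset.sum_mul]
      simp [mul_assoc]
    rw [Finset.sum_congr rfl (fun g _ => h1 g), Finset.sum_comm]
    refine Finset.sum_eq_zero fun k hk => ?_
    rw [← Finset.mul_sum, hsum k (Nat.lt_succ_iff.mp (Finset.mem_range.mp hk)),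
      mul_zero]
  have key2 : ∑ g : G, p.eval (Θ g) * (starRingEnd ℂ) (V.character g)
      = p.eval (Θ 1) * (starRingEnd ℂ) (V.character 1) := by
    refine Fintype.sum_eq_single 1 fun g hg => ?_
    have hmem : Θ g ∈ T :=
      Finset.mem_erase.mpr ⟨hne g hg, by simp [hS]⟩
    rw [hp, Polynomial.eval_prod, Finset.prod_eq_zero hmem (by simp), zero_mul]
  have hp1 : p.eval (Θ 1) ≠ 0 := by
    rw [hp, Polynomial.eval_prod]
    refine Finset.prod_ne_zero_iff.mpr fun a ha => ?_
    have : a ≠ Θ 1 := (Finset.mem_erase.mp ha).1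
    simp only [eval_sub, eval_X, eval_C]
    exact sub_ne_zero.mpr (Ne.symm this)
  have hfr : Module.finrank ℂ V ≠ 0 := by
    intro h0
    have hss : Subsingleton V := Module.finrank_zero_iff.mp h0
    refine CategoryTheory.id_nonzero V ?_
    ext x
    exact hss.elim _ _
  have hchi1 : (starRingEnd ℂ) (V.character 1) ≠ 0 := by
    rw [FDRep.char_one]
    simp [hfr]
  rw [key2] at key
  exact (mul_ne_zero hp1 hchi1) key
end

section
/- Let G = A ⋊ H be a finite group that is a split extension of a normal abelian subgroup A by a subgroup H. Then for any χ ∈ Irr(G) and any linear character λ ∈ Irr(H), the multiplicity [χ|_H, λ]_H is at most 1. -/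
open scoped BigOperators

namespace Stmt5Aux

open CategoryTheory

variable {G : Type} [Group G]

noncomputable def subRep (V : FDRep ℂ G) (U : Submodule ℂ V)
    (hinv : ∀ g : G, ∀ v ∈ U, V.ρ g v ∈ U) : FDRep ℂ G :=
  FDRep.of
    { toFun := fun g => (V.ρ g).restrict (fun v hv => hinv g v hv)
      map_one' := by ext v; simp [LinearMap.restrict_apply]
      map_mul' := fun g g' => by
        ext v; simp [LinearMap.restrict_apply, map_mul] }

noncomputable def subRepHom (V : FDRep ℂ G) (U : Submodule ℂ V)
    (hinv : ∀ g : G, ∀ v ∈ U, V.ρ g v ∈ U) : subRep V U hinv ⟶ V where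
  hom := FGModuleCat.ofHom U.subtype
  comm := fun g => by ext v; rfl

theorem subRep_eq_top (V : FDRep ℂ G) [Simple V] (U : Submodule ℂ V)
    (hinv : ∀ g : G, ∀ v ∈ U, V.ρ g v ∈ U) (hne : U ≠ ⊥) : U = ⊤ := by
  obtain ⟨w, hwU, hw⟩ := Submodule.exists_mem_ne_zero_of_ne_bot hne
  have hmono : Mono (subRepHom V U hinv) := by
    have h2 : Mono ((forget₂ (FGModuleCat ℂ) (ModuleCat ℂ)).map
        ((forget₂ (FDRep ℂ G) (FGModuleCat ℂ)).map (subRepHom V U hinv))) := by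
      rw [ModuleCat.mono_iff_injective]
      exact fun a b h => Subtype.val_injective h
    exact (forget₂ (FDRep ℂ G) (FGModuleCat ℂ)).mono_of_mono_map
      ((forget₂ (FGModuleCat ℂ) (ModuleCat ℂ)).mono_of_mono_map h2)
  have hnz : subRepHom V U hinv ≠ 0 := by
    intro h
    have : (subRepHom V U hinv).hom ⟨w, hwU⟩ = U.subtype ⟨w, hwU⟩ := rfl
    rw [h] at this
    exact hw (this.symm.trans rfl)
  haveI := hmono
  haveI : IsIso (subRepHom V U hinv) := isIso_of_mono_of_nonzero hnz
  have hsurj : Function.Surjective (subRepHom V U hinv).hom :=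
    (FDRep.isoToLinearEquiv (asIso (subRepHom V U hinv))).surjective
  rw [eq_top_iff]
  intro v _
  obtain ⟨u, hu⟩ := hsurj v
  have hu' : ((show ↥U from u) : V) = v := hu
  rw [← hu']; exact (show ↥U from u).2

theorem span_orbit (V : FDRep ℂ G) [Simple V] {w : V} (hw : w ≠ 0) :
    Submodule.span ℂ (Set.range fun g : G => V.ρ g w) = ⊤ := by
  set U : Submodule ℂ V := Submodule.span ℂ (Set.range fun g : G => V.ρ g w) with hU
  have hinv : ∀ g : G, ∀ v ∈ U, V.ρ g v ∈ U := by
    intro g v hv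
    induction hv using Submodule.span_induction with
    | mem x hx =>
        obtain ⟨g', rfl⟩ := hx
        have : V.ρ g (V.ρ g' w) = V.ρ (g * g') w := by rw [map_mul]; rfl
        rw [hU, this]
        exact Submodule.subset_span ⟨g * g', rfl⟩
    | zero => simp
    | add x y _ _ hx hy => rw [map_add]; exact U.add_mem hx hy
    | smul c x _ hx => rw [map_smul]; exact U.smul_mem c hx
  refine subRep_eq_top V U hinv ?_
  intro hbot
  apply hw
  have hwmem : w ∈ U := by
    rw [hU]
    exact Submodule.subset_span ⟨1, by simp⟩
  rw [hbot] at hwmem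
  simpa using hwmem

section P

variable (H : Subgroup G) (V : FDRep ℂ G) (lam : H →* ℂ) [Fintype H]

noncomputable def Pm : V →ₗ[ℂ] V :=
  (Fintype.card H : ℂ)⁻¹ • ∑ h : H, (lam h)⁻¹ • V.ρ (h : G)

theorem cardH_ne : (Fintype.card H : ℂ) ≠ 0 := by
  haveI : Nonempty H := ⟨1⟩
  exact_mod_cast Nat.cast_ne_zero.mpr Fintype.card_ne_zero

theorem lam_root (h : H) : lam h ^ Fintype.card H = 1 := by
  rw [← map_pow, pow_card_eq_one, map_one]

theorem lam_ne_zero (h : H) : lam h ≠ 0 := by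
  intro h0
  haveI : Nonempty H := ⟨1⟩
  have hr := lam_root H lam h
  rw [h0, zero_pow Fintype.card_ne_zero] at hr
  exact one_ne_zero hr.symm

theorem lam_conj (h : H) : (starRingEnd ℂ) (lam h) = (lam h)⁻¹ := by
  haveI : Nonempty H := ⟨1⟩
  have hnorm : ‖lam h‖ = 1 :=
    Complex.norm_eq_one_of_pow_eq_one (lam_root H lam h) Fintype.card_ne_zero
  exact (Complex.inv_eq_conj hnorm).symm

theorem lam_inv_coe (h : H) : (lam h)⁻¹ = lam h⁻¹ := by
  have : lam h⁻¹ * lam h = 1 := by rw [← map_mul, inv_mul_cancel, map_one]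
  exact (eq_inv_of_mul_eq_one_left this).symm

theorem Pm_apply (v : V) :
    Pm H V lam v = (Fintype.card H : ℂ)⁻¹ • ∑ h : H, (lam h)⁻¹ • V.ρ (h : G) v := by
  simp [Pm]

theorem rho_comp_Pm (h : H) (v : V) :
    V.ρ (h : G) (Pm H V lam v) = lam h • Pm H V lam v := by
  have key : ∀ x : H, V.ρ (h : G) ((lam x)⁻¹ • V.ρ (x : G) v)
      = lam h • ((lam (h * x))⁻¹ • V.ρ ((h * x : H) : G) v) := by
    intro x
    rw [map_smul, smul_smul, map_mul, mul_inv]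
    have h1 : (lam h) * ((lam h)⁻¹ * (lam x)⁻¹) = (lam x)⁻¹ := by
      rw [← mul_assoc, mul_inv_cancel₀ (lam_ne_zero H lam h), one_mul]
    rw [h1]
    have h2 : V.ρ ((h : G) * (x : G)) = V.ρ (h : G) * V.ρ (x : G) := map_mul _ _ _
    rw [Subgroup.coe_mul, h2]
    rfl
  calc V.ρ (h : G) (Pm H V lam v)
      = (Fintype.card H : ℂ)⁻¹ • ∑ x : H, V.ρ (h : G) ((lam x)⁻¹ • V.ρ (x : G) v) := by
        rw [Pm_apply, map_smul, map_sum]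
    _ = (Fintype.card H : ℂ)⁻¹ •
        ∑ x : H, lam h • ((lam (h * x))⁻¹ • V.ρ ((h * x : H) : G) v) := by
        rw [Finset.sum_congr rfl fun x _ => key x]
    _ = (Fintype.card H : ℂ)⁻¹ • (lam h • ∑ y : H, (lam y)⁻¹ • V.ρ (y : G) v) := by
        rw [← Finset.smul_sum]
        congr 1
        exact congrArg (lam h • ·) (Fintype.sum_equiv (Equiv.mulLeft h) _ _ (fun x => rfl))
    _ = lam h • Pm H V lam v := by rw [Pm_apply, smul_comm]

theorem Pm_comp_rho (h : H) (v : V) :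
    Pm H V lam (V.ρ (h : G) v) = lam h • Pm H V lam v := by
  have key : ∀ x : H, (lam x)⁻¹ • V.ρ (x : G) (V.ρ (h : G) v)
      = lam h • ((lam (x * h))⁻¹ • V.ρ ((x * h : H) : G) v) := by
    intro x
    rw [smul_smul, map_mul, mul_inv]
    have h1 : lam h * ((lam x)⁻¹ * (lam h)⁻¹) = (lam x)⁻¹ := by
      rw [mul_comm ((lam x)⁻¹), ← mul_assoc, mul_inv_cancel₀ (lam_ne_zero H lam h), one_mul]
    rw [h1]
    have h2 : V.ρ ((x : G) * (h : G)) = V.ρ (x : G) * V.ρ (h : G) := map_mul _ _ _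
    rw [Subgroup.coe_mul, h2]
    rfl
  calc Pm H V lam (V.ρ (h : G) v)
      = (Fintype.card H : ℂ)⁻¹ • ∑ x : H, (lam x)⁻¹ • V.ρ (x : G) (V.ρ (h : G) v) := by
        rw [Pm_apply]
    _ = (Fintype.card H : ℂ)⁻¹ •
        ∑ x : H, lam h • ((lam (x * h))⁻¹ • V.ρ ((x * h : H) : G) v) := by
        rw [Finset.sum_congr rfl fun x _ => key x]
    _ = (Fintype.card H : ℂ)⁻¹ • (lam h • ∑ y : H, (lam y)⁻¹ • V.ρ (y : G) v) := by
        rw [← Finset.smul_sum]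
        congr 1
        exact congrArg (lam h • ·) (Fintype.sum_equiv (Equiv.mulRight h) _ _ (fun x => rfl))
    _ = lam h • Pm H V lam v := by rw [Pm_apply, smul_comm]

theorem Pm_idem (v : V) : Pm H V lam (Pm H V lam v) = Pm H V lam v := by
  conv_lhs => rw [Pm_apply H V lam v]
  rw [map_smul, map_sum]
  have key : ∀ h : H, Pm H V lam ((lam h)⁻¹ • V.ρ (h : G) v) = Pm H V lam v := by
    intro h
    rw [map_smul, Pm_comp_rho, smul_smul, inv_mul_cancel₀ (lam_ne_zero H lam h), one_smul]
  rw [Finset.sum_congr rfl fun h _ => key h, Finset.sum_const, Finset.card_univ,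
    ← Nat.cast_smul_eq_nsmul ℂ, smul_smul, inv_mul_cancel₀ (cardH_ne H), one_smul]

theorem Pm_fix {v : V} (hv : v ∈ LinearMap.range (Pm H V lam)) : Pm H V lam v = v := by
  obtain ⟨u, rfl⟩ := hv
  exact Pm_idem H V lam u

noncomputable def Tm (x : G) : V →ₗ[ℂ] V :=
  Pm H V lam ∘ₗ V.ρ x ∘ₗ Pm H V lam

theorem Tm_apply (x : G) (v : V) :
    Tm H V lam x v = Pm H V lam (V.ρ x (Pm H V lam v)) := rfl

theorem Tm_mem_range (x : G) (v : V) : Tm H V lam x v ∈ LinearMap.range (Pm H V lam) :=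
  ⟨V.ρ x (Pm H V lam v), rfl⟩

theorem Tm_conj (h : H) (x : G) (v : V) :
    Tm H V lam ((h : G) * x * (h : G)⁻¹) v = Tm H V lam x v := by
  rw [Tm_apply, Tm_apply]
  have e1 : V.ρ ((h : G) * x * (h : G)⁻¹) (Pm H V lam v)
      = V.ρ (h : G) (V.ρ x (V.ρ (h : G)⁻¹ (Pm H V lam v))) := by
    rw [map_mul, map_mul]; rfl
  have e2 : V.ρ (h : G)⁻¹ (Pm H V lam v) = lam h⁻¹ • Pm H V lam v := by
    have : ((h⁻¹ : H) : G) = (h : G)⁻¹ := rfl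
    rw [← this, rho_comp_Pm]
  rw [e1, e2]
  simp only [map_smul]
  rw [Pm_comp_rho, smul_smul, ← map_mul, inv_mul_cancel, map_one, one_smul]

theorem Tm_mul (x y : G) (v : V) :
    Tm H V lam x (Tm H V lam y v) =
      (Fintype.card H : ℂ)⁻¹ • ∑ h : H, Tm H V lam (x * ((h : G) * y * (h : G)⁻¹)) v := by
  have hfix : Pm H V lam (Tm H V lam y v) = Tm H V lam y v :=
    Pm_fix H V lam (Tm_mem_range H V lam y v)
  rw [Tm_apply, hfix, Tm_apply]
  set u := Pm H V lam v with hu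
  have key : ∀ h : H, (lam h)⁻¹ • Pm H V lam (V.ρ x (V.ρ (h : G) (V.ρ y u)))
      = Tm H V lam (x * ((h : G) * y * (h : G)⁻¹)) v := by
    intro h
    have e0 : V.ρ (h : G) (V.ρ y u) = V.ρ ((h : G) * y) u := by rw [map_mul]; rfl
    have e1 : V.ρ x (V.ρ ((h : G) * y) u) = V.ρ (x * ((h : G) * y * (h : G)⁻¹)) (V.ρ (h : G) u) := by
      have : x * ((h : G) * y * (h : G)⁻¹) * (h : G) = x * ((h : G) * y) := by group
      rw [← Module.End.mul_apply, ← map_mul, ← this, map_mul, Module.End.mul_apply]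
    have e2 : V.ρ (h : G) u = lam h • u := by rw [hu, rho_comp_Pm]
    rw [e0, e1, e2, map_smul, map_smul, smul_smul, inv_mul_cancel₀ (lam_ne_zero H lam h),
      one_smul, Tm_apply]
  calc Pm H V lam (V.ρ x (Pm H V lam (V.ρ y u)))
      = Pm H V lam (V.ρ x ((Fintype.card H : ℂ)⁻¹ • ∑ h : H, (lam h)⁻¹ • V.ρ (h : G) (V.ρ y u))) := by
        rw [Pm_apply H V lam (V.ρ y u)]
    _ = (Fintype.card H : ℂ)⁻¹ •
        ∑ h : H, (lam h)⁻¹ • Pm H V lam (V.ρ x (V.ρ (h : G) (V.ρ y u))) := by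
        simp only [map_smul, map_sum]
    _ = (Fintype.card H : ℂ)⁻¹ • ∑ h : H, Tm H V lam (x * ((h : G) * y * (h : G)⁻¹)) v := by
        rw [Finset.sum_congr rfl fun h _ => key h]

theorem Tm_comm (A : Subgroup G) [A.Normal]
    (hab : ∀ a b : G, a ∈ A → b ∈ A → a * b = b * a)
    {a b : G} (ha : a ∈ A) (hb : b ∈ A) (v : V) :
    Tm H V lam a (Tm H V lam b v) = Tm H V lam b (Tm H V lam a v) := by
  rw [Tm_mul, Tm_mul]
  congr 1
  refine Fintype.sum_equiv (Equiv.inv H) _ _ fun h => ?_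
  have hmem : (h : G)⁻¹ * a * (h : G) ∈ A := by
    have := Subgroup.Normal.conj_mem ‹A.Normal› a ha (h : G)⁻¹
    simpa using this
  have e1 : b * ((((h⁻¹ : H) : G)) * a * (((h⁻¹ : H) : G))⁻¹) = ((h : G)⁻¹ * a * (h : G)) * b := by
    have hc : b * ((h : G)⁻¹ * a * (h : G)) = ((h : G)⁻¹ * a * (h : G)) * b :=
      hab b _ hb hmem
    have : ((h⁻¹ : H) : G) = (h : G)⁻¹ := rfl
    rw [this]
    simpa [mul_assoc] using hc
  have e2 : ((h : G)⁻¹ * a * (h : G)) * b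
      = (h : G)⁻¹ * (a * ((h : G) * b * (h : G)⁻¹)) * ((h : G)⁻¹)⁻¹ := by group
  show Tm H V lam (a * ((h : G) * b * (h : G)⁻¹)) v
      = Tm H V lam (b * ((((Equiv.inv H) h : H) : G) * a * ((((Equiv.inv H) h : H) : G))⁻¹)) v
  have : ((Equiv.inv H) h : H) = h⁻¹ := rfl
  rw [this, e1, e2]
  have := Tm_conj H V lam h⁻¹ (a * ((h : G) * b * (h : G)⁻¹)) v
  have hcoe : ((h⁻¹ : H) : G) = (h : G)⁻¹ := rfl
  rw [hcoe] at this
  rw [this]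

theorem range_le_span [Simple V] (A : Subgroup G)
    (hcomp : Subgroup.IsComplement' A H)
    {w : V} (hw : w ∈ LinearMap.range (Pm H V lam)) (hw0 : w ≠ 0) :
    LinearMap.range (Pm H V lam) ≤
      Submodule.span ℂ (Set.range fun a : A => Tm H V lam (a : G) w) := by
  have hwfix : Pm H V lam w = w := Pm_fix H V lam hw
  intro v hv
  obtain ⟨u, rfl⟩ := hv
  have htop := span_orbit V hw0
  have humem : u ∈ Submodule.span ℂ (Set.range fun g : G => V.ρ g w) := by
    rw [htop]; trivial
  have hmap : Pm H V lam u ∈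
      (Submodule.span ℂ (Set.range fun g : G => V.ρ g w)).map (Pm H V lam) :=
    Submodule.mem_map_of_mem humem
  rw [Submodule.map_span] at hmap
  refine Submodule.span_le.mpr ?_ hmap
  rintro _ ⟨_, ⟨g, rfl⟩, rfl⟩
  obtain ⟨⟨⟨a, ha⟩, ⟨h, hh⟩⟩, hg, -⟩ := hcomp.existsUnique g
  simp only at hg
  have e1 : Pm H V lam (V.ρ g w) = lam ⟨h, hh⟩ • Tm H V lam a w := by
    rw [← hg, map_mul, Module.End.mul_apply]
    have e2 : V.ρ h w = lam ⟨h, hh⟩ • w := by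
      conv_lhs => rw [← hwfix]
      rw [rho_comp_Pm H V lam ⟨h, hh⟩, hwfix]
    rw [e2, map_smul, map_smul, Tm_apply, hwfix]
  rw [e1]
  exact Submodule.smul_mem _ _
    (Submodule.subset_span ⟨⟨a, ha⟩, rfl⟩)

theorem Tm_scalar [Simple V] (A : Subgroup G) [A.Normal]
    (hab : ∀ a b : G, a ∈ A → b ∈ A → a * b = b * a)
    (hcomp : Subgroup.IsComplement' A H)
    (hbot : LinearMap.range (Pm H V lam) ≠ ⊥)
    {a : G} (ha : a ∈ A) :
    ∃ c : ℂ, ∀ v ∈ LinearMap.range (Pm H V lam), Tm H V lam a v = c • v := by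
  set R := LinearMap.range (Pm H V lam) with hR
  have hmapsto : ∀ v ∈ R, Tm H V lam a v ∈ R := fun v _ => Tm_mem_range H V lam a v
  let E : Module.End ℂ R := (Tm H V lam a).restrict hmapsto
  haveI : Nontrivial R := Submodule.nontrivial_iff_ne_bot.mpr hbot
  obtain ⟨c, hc⟩ := Module.End.exists_eigenvalue E
  obtain ⟨⟨k, hkR⟩, hkE, hk0⟩ := hc.exists_hasEigenvector
  have hk0' : k ≠ 0 := fun h => hk0 (Subtype.ext h)
  have hkE' : E ⟨k, hkR⟩ = c • (⟨k, hkR⟩ : R) := Module.End.mem_eigenspace_iff.mp hkE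
  have hkeig : Tm H V lam a k = c • k := congrArg Subtype.val hkE'
  refine ⟨c, fun v hv => ?_⟩
  -- the eigenspace within R
  set K : Submodule ℂ V := R ⊓ LinearMap.ker (Tm H V lam a - c • LinearMap.id) with hK
  have hmemK : ∀ x : V, x ∈ R → Tm H V lam a x = c • x → x ∈ K := by
    intro x hxR hxeig
    refine ⟨hxR, LinearMap.mem_ker.mpr ?_⟩
    rw [LinearMap.sub_apply, LinearMap.smul_apply, LinearMap.id_apply, sub_eq_zero]
    exact hxeig
  have hkK : k ∈ K := hmemK k hkR hkeig
  have hspan : R ≤ Submodule.span ℂ (Set.range fun b : A => Tm H V lam (b : G) k) :=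
    range_le_span H V lam A hcomp hkR hk0'
  have hTbK : ∀ b : A, Tm H V lam (b : G) k ∈ K := by
    intro b
    refine hmemK _ (Tm_mem_range H V lam _ k) ?_
    rw [Tm_comm H V lam A hab ha b.2 k, hkeig, map_smul]
  have hRK : R ≤ K := by
    refine le_trans hspan (Submodule.span_le.mpr ?_)
    rintro _ ⟨b, rfl⟩
    exact hTbK b
  have hvK := hRK hv
  have h2 := LinearMap.mem_ker.mp hvK.2
  rw [LinearMap.sub_apply, LinearMap.smul_apply, LinearMap.id_apply, sub_eq_zero] at h2
  exact h2

theorem finrank_range_le_one [Simple V] (A : Subgroup G) [A.Normal]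
    (hab : ∀ a b : G, a ∈ A → b ∈ A → a * b = b * a)
    (hcomp : Subgroup.IsComplement' A H) :
    Module.finrank ℂ (LinearMap.range (Pm H V lam)) ≤ 1 := by
  by_cases hbot : LinearMap.range (Pm H V lam) = ⊥
  · rw [hbot]
    simp
  obtain ⟨w, hwR, hw0⟩ := Submodule.exists_mem_ne_zero_of_ne_bot hbot
  have hspan : LinearMap.range (Pm H V lam) ≤ Submodule.span ℂ {w} := by
    refine le_trans (range_le_span H V lam A hcomp hwR hw0) (Submodule.span_le.mpr ?_)
    rintro _ ⟨b, rfl⟩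
    show Tm H V lam (b : G) w ∈ _
    obtain ⟨c, hc⟩ := Tm_scalar H V lam A hab hcomp hbot b.2
    rw [hc w hwR]
    exact Submodule.smul_mem _ _ (Submodule.mem_span_singleton_self w)
  calc Module.finrank ℂ (LinearMap.range (Pm H V lam))
      ≤ Module.finrank ℂ (Submodule.span ℂ {w}) := Submodule.finrank_mono hspan
    _ = 1 := finrank_span_singleton hw0

theorem trace_Pm :
    LinearMap.trace ℂ V (Pm H V lam) =
      (Fintype.card H : ℂ)⁻¹ * ∑ h : H, V.character (h : G) * (starRingEnd ℂ) (lam h) := by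
  unfold Pm
  rw [map_smul, map_sum, smul_eq_mul]
  congr 1
  refine Finset.sum_congr rfl fun h _ => ?_
  rw [map_smul, smul_eq_mul, lam_conj H lam h, mul_comm]
  rfl

theorem isProj_Pm : LinearMap.IsProj (LinearMap.range (Pm H V lam)) (Pm H V lam) :=
  ⟨fun x => LinearMap.mem_range_self _ x, fun _ hx => Pm_fix H V lam hx⟩

end P

end Stmt5Aux

/-- If G = A ⋊ H with A normal abelian, χ ∈ Irr(G) and λ a linear character of H,
then [χ|_H, λ]_H ≤ 1. -/
theorem stmt_5 (G : Type) [Group G] [Fintype G] (A H : Subgroup G)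
    [A.Normal] (hab : ∀ a b : G, a ∈ A → b ∈ A → a * b = b * a)
    (hcomp : Subgroup.IsComplement' A H)
    (χ : G → ℂ) (hχ : IsIrrChar G χ) (lam : H →* ℂ) :
    ‖innerChar H (fun h => χ ↑h) (fun h => lam h)‖ ≤ 1 := by
  obtain ⟨V, hs, rfl⟩ := hχ
  haveI := hs
  haveI : Fintype H := Fintype.ofFinite _
  have h1 : innerChar H (fun h => V.character ↑h) (fun h => lam h)
      = LinearMap.trace ℂ V (Stmt5Aux.Pm H V lam) := by
    rw [innerChar, finsum_eq_sum_of_fintype, Nat.card_eq_fintype_card, Stmt5Aux.trace_Pm]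
  have h2 := (Stmt5Aux.isProj_Pm H V lam).trace
  have h3 : Module.finrank ℂ (LinearMap.range (Stmt5Aux.Pm H V lam)) ≤ 1 :=
    Stmt5Aux.finrank_range_le_one H V lam A hab hcomp
  rw [h1, h2, Complex.norm_natCast]
  exact_mod_cast h3
end

section
/- For a prime power q and integers 0 ≤ i ≤ j, the Gaussian binomial coefficient satisfies binom(j,i)_q < (32/9)·q^{i(j−i)}. -/
open scoped BigOperators

open Finset in
lemma aux_prod_half (n : ℕ) (hn : 3 ≤ n) :
    9/32 + 3/8 * (1/2:ℝ)^n ≤ ∏ s ∈ range n, (1 - (1/2:ℝ)^(s+1)) := by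
  induction n with
  | zero => omega
  | succ n ih =>
    rcases Nat.lt_or_ge n 3 with h | h
    · interval_cases n
      · omega
      · omega
      · simp [Finset.prod_range_succ]; norm_num
    · have H := ih (by omega)
      rw [Finset.prod_range_succ]
      have h1 : (1/2:ℝ)^n ≤ (1/2:ℝ)^3 := by
        apply pow_le_pow_of_le_one <;> norm_num <;> omega
      have hpos : (0:ℝ) < (1/2:ℝ)^n := by positivity
      have hx : (1/2:ℝ)^(n+1) = (1/2)^n * (1/2) := pow_succ _ _
      have hnn : (0:ℝ) ≤ 1 - (1/2:ℝ)^(n+1) := by rw [hx]; nlinarith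
      nlinarith [mul_le_mul_of_nonneg_right H hnn]

open Finset in
lemma aux_prod_half_gt (n : ℕ) :
    (9/32 : ℝ) < ∏ s ∈ range n, (1 - (1/2:ℝ)^(s+1)) := by
  rcases Nat.lt_or_ge n 3 with h | h
  · interval_cases n <;> simp [Finset.prod_range_succ] <;> norm_num
  · have := aux_prod_half n h
    have : (0:ℝ) < (1/2:ℝ)^n := by positivity
    linarith [aux_prod_half n h]

/-- The Gaussian binomial coefficient satisfies binom(j,i)_q < (32/9)·q^{i(j−i)}. -/
theorem stmt_6 (q : ℕ) (hq : 2 ≤ q) (i j : ℕ) (hij : i ≤ j) :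
    (∏ t ∈ Finset.range i, ((q : ℝ) ^ j - (q : ℝ) ^ t)) /
      (∏ t ∈ Finset.range i, ((q : ℝ) ^ i - (q : ℝ) ^ t)) <
    32 / 9 * (q : ℝ) ^ (i * (j - i)) := by
  have hq1 : (1:ℝ) < q := by exact_mod_cast Nat.lt_of_lt_of_le one_lt_two hq
  have hq0 : (0:ℝ) < q := by linarith
  -- P = ∏ (1 - (1/q)^(s+1))
  set P : ℝ := ∏ s ∈ Finset.range i, (1 - (1/(q:ℝ))^(s+1)) with hP
  have hqi : (1:ℝ)/q ≤ 1/2 := by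
    rw [div_le_div_iff₀ hq0 (by norm_num)]
    have : (2:ℝ) ≤ q := by exact_mod_cast hq
    linarith
  have hP9 : (9/32 : ℝ) < P := by
    calc (9/32 : ℝ) < ∏ s ∈ Finset.range i, (1 - (1/2:ℝ)^(s+1)) := aux_prod_half_gt i
    _ ≤ P := by
        apply Finset.prod_le_prod
        · intro s _
          have : (1/2:ℝ)^(s+1) ≤ 1 := by
            apply pow_le_one₀ <;> norm_num
          linarith
        · intro s _
          have : (1/(q:ℝ))^(s+1) ≤ (1/2:ℝ)^(s+1) := by
            apply pow_le_pow_left₀ (by positivity) hqi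
          linarith
  have hPpos : 0 < P := by linarith
  -- denominator equals q^(i*i) * P
  have hD : (∏ t ∈ Finset.range i, ((q : ℝ) ^ i - (q : ℝ) ^ t)) = (q:ℝ)^(i*i) * P := by
    rw [hP]
    have : P = ∏ t ∈ Finset.range i, (1 - (1/(q:ℝ))^(i - t)) := by
      rw [hP, ← Finset.prod_range_reflect]
      apply Finset.prod_congr rfl
      intro t ht
      simp only [Finset.mem_range] at ht
      congr 2
      omega
    rw [hP] at this
    rw [this, show ((q:ℝ))^(i*i) = ∏ _t ∈ Finset.range i, (q:ℝ)^i from by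
          rw [Finset.prod_const, Finset.card_range, ← pow_mul],
        ← Finset.prod_mul_distrib]
    apply Finset.prod_congr rfl
    intro t ht
    simp only [Finset.mem_range] at ht
    have h2 : ((q:ℝ)^i) * (1/(q:ℝ))^(i-t) = (q:ℝ)^t := by
      have h3 : (q:ℝ)^i = (q:ℝ)^t * (q:ℝ)^(i-t) := by rw [← pow_add]; congr 1; omega
      rw [h3, one_div, inv_pow, mul_assoc, mul_inv_cancel₀ (by positivity), mul_one]
    rw [mul_sub, mul_one, h2]
  -- numerator bound
  have hN : (∏ t ∈ Finset.range i, ((q : ℝ) ^ j - (q : ℝ) ^ t)) ≤ (q:ℝ)^(i*j) := by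
    calc (∏ t ∈ Finset.range i, ((q : ℝ) ^ j - (q : ℝ) ^ t))
        ≤ ∏ _t ∈ Finset.range i, (q:ℝ)^j := by
          apply Finset.prod_le_prod
          · intro t ht
            simp only [Finset.mem_range] at ht
            have : (q:ℝ)^t ≤ (q:ℝ)^j := pow_le_pow_right₀ (le_of_lt hq1) (by omega)
            linarith
          · intro t _
            have : (0:ℝ) < (q:ℝ)^t := by positivity
            linarith
      _ = (q:ℝ)^(i*j) := by rw [Finset.prod_const, Finset.card_range, ← pow_mul, Nat.mul_comm]
  have hsplit : (q:ℝ)^(i*j) = (q:ℝ)^(i*i) * (q:ℝ)^(i*(j-i)) := by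
    rw [← pow_add]; congr 1
    rw [← Nat.mul_add, Nat.add_sub_cancel' hij]
  rw [hD, div_lt_iff₀ (by positivity)]
  calc (∏ t ∈ Finset.range i, ((q : ℝ) ^ j - (q : ℝ) ^ t)) ≤ (q:ℝ)^(i*j) := hN
    _ = (q:ℝ)^(i*i) * (q:ℝ)^(i*(j-i)) := hsplit
    _ < 32 / 9 * (q:ℝ) ^ (i * (j - i)) * ((q:ℝ) ^ (i * i) * P) := by
        have hx : (0:ℝ) < (q:ℝ)^(i*i) := by positivity
        have hy : (0:ℝ) < (q:ℝ)^(i*(j-i)) := by positivity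
        nlinarith [mul_lt_mul_of_pos_right (show (1:ℝ) < 32/9*P by linarith)
          (mul_pos hx hy)]
end
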